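/- Let d ≥ 1, let z be a standard Gaussian vector on ℝ^d, let v ∈ ℝ^d with v ≠ 0, and let R_v denote the reflection along v, i.e., R_v z = z − 2⟨v, z⟩v/‖v‖². Suppose f : ℝ^d → ℝ is measurable and satisfies f(R_v z) = f(z) for all z ∈ ℝ^d. Then for every real-analytic function F : ℝ → ℝ such that z ↦ F(f(z))⟨v, z⟩ is integrable with respect to the standard Gaussian measure, E[F(f(z))⟨v, z⟩] = 0. -/

import Mathlib

open MeasureTheory ProbabilityTheory
open scoped ENNReal NNReal

/-- The standard Gaussian measure on `ℝ^d` (i.i.d. `N(0,1)` coordinates). -/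
noncomputable def stdGaussian (d : ℕ) : Measure (EuclideanSpace ℝ (Fin d)) :=
  (Measure.pi fun _ => gaussianReal 0 1).map (WithLp.toLp 2)

/-- The reflection along the direction `v`: `R_v z = z - 2⟨v,z⟩v/‖v‖²`. -/
noncomputable def reflAlong {d : ℕ} (v : EuclideanSpace ℝ (Fin d)) :
    EuclideanSpace ℝ (Fin d) → EuclideanSpace ℝ (Fin d) :=
  fun z => z - (2 * (inner ℝ v z : ℝ) / ‖v‖ ^ 2) • v

/- Auxiliary lemmas -/

lemma aux_lintegral_pi_prod :
    ∀ (n : ℕ) (F : Fin n → ℝ → ℝ≥0∞), (∀ i, Measurable (F i)) →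
    ∫⁻ x : Fin n → ℝ, ∏ i, F i (x i) ∂(Measure.pi fun _ => (volume : Measure ℝ))
      = ∏ i, ∫⁻ y, F i y := by
  intro n
  induction n with
  | zero =>
    intro F hF
    simp
  | succ n ih =>
    intro F hF
    have h := measurePreserving_piFinSuccAbove (fun _ : Fin (n+1) => (volume : Measure ℝ)) 0
    have hg : Measurable fun p : ℝ × (Fin n → ℝ) => F 0 p.1 * ∏ j, F (Fin.succ j) (p.2 j) :=
      ((hF 0).comp measurable_fst).mul <|
        Finset.measurable_prod _ fun j _ =>
          (hF _).comp ((measurable_pi_apply j).comp measurable_snd)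
    calc ∫⁻ x : Fin (n+1) → ℝ, ∏ i, F i (x i) ∂(Measure.pi fun _ => volume)
        = ∫⁻ p : ℝ × (Fin n → ℝ), F 0 p.1 * ∏ j, F (Fin.succ j) (p.2 j)
            ∂((volume : Measure ℝ).prod (Measure.pi fun _ => volume)) := by
          rw [← h.lintegral_comp hg]
          congr 1
          funext x
          simp [MeasurableEquiv.piFinSuccAbove_apply, Fin.prod_univ_succ, Fin.zero_succAbove, Fin.tail]
      _ = (∫⁻ y, F 0 y) * ∏ j, ∫⁻ y, F (Fin.succ j) y := by
          rw [lintegral_prod _ hg.aemeasurable]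
          have hprod : Measurable fun y : Fin n → ℝ => ∏ j, F (Fin.succ j) (y j) :=
            Finset.measurable_prod _ fun j _ => (hF _).comp (measurable_pi_apply j)
          simp_rw [lintegral_const_mul _ hprod]
          rw [lintegral_mul_const _ (hF 0), ih _ fun j => hF _]
      _ = ∏ i, ∫⁻ y, F i y := by rw [Fin.prod_univ_succ]

lemma aux_pi_gaussian (d : ℕ) :
    (Measure.pi fun _ : Fin d => gaussianReal 0 1)
      = (volume : Measure (Fin d → ℝ)).withDensity
          (fun x => ∏ i, gaussianPDF 0 1 (x i)) := by
  apply Measure.pi_eq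
  intro s hs
  rw [withDensity_apply _ (MeasurableSet.univ_pi hs),
    ← lintegral_indicator (MeasurableSet.univ_pi hs) _]
  have key : ∀ x : Fin d → ℝ,
      (Set.univ.pi s).indicator (fun x => ∏ i, gaussianPDF 0 1 (x i)) x
        = ∏ i, (s i).indicator (gaussianPDF 0 1) (x i) := by
    intro x
    by_cases hx : x ∈ Set.univ.pi s
    · rw [Set.indicator_of_mem hx]
      exact Finset.prod_congr rfl fun i _ =>
        (Set.indicator_of_mem (hx i (Set.mem_univ i)) _).symm
    · rw [Set.indicator_of_notMem hx]
      rw [Set.mem_univ_pi] at hx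
      push_neg at hx
      obtain ⟨i, hi⟩ := hx
      exact (Finset.prod_eq_zero (Finset.mem_univ i)
        (Set.indicator_of_notMem hi _)).symm
  simp_rw [key]
  rw [volume_pi, aux_lintegral_pi_prod d _
    (fun i => (measurable_gaussianPDF 0 1).indicator (hs i))]
  refine Finset.prod_congr rfl fun i _ => ?_
  rw [lintegral_indicator (hs i) _, gaussianReal_of_var_ne_zero _ one_ne_zero,
    withDensity_apply _ (hs i)]

lemma aux_prod_pdf_eq (d : ℕ) (x : EuclideanSpace ℝ (Fin d)) :
    (∏ i, gaussianPDF 0 1 (x i))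
      = ENNReal.ofReal
          ((Real.sqrt (2 * Real.pi))⁻¹ ^ d * Real.exp (-‖x‖ ^ 2 / 2)) := by
  have h1 : ∀ y : ℝ, gaussianPDFReal 0 1 y
      = (Real.sqrt (2 * Real.pi))⁻¹ * Real.exp (-(y ^ 2) / 2) := by
    intro y
    simp [gaussianPDFReal]
  have hnorm : ‖x‖ ^ 2 = ∑ i, x i ^ 2 := by
    rw [EuclideanSpace.norm_eq,
      Real.sq_sqrt (Finset.sum_nonneg fun i _ => sq_nonneg _)]
    exact Finset.sum_congr rfl fun i _ => by
      rw [Real.norm_eq_abs, sq_abs]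
  unfold gaussianPDF
  rw [← ENNReal.ofReal_prod_of_nonneg fun i _ => gaussianPDFReal_nonneg 0 1 (x i)]
  congr 1
  simp_rw [h1]
  rw [Finset.prod_mul_distrib, Finset.prod_const, ← Real.exp_sum, Finset.card_univ,
    Fintype.card_fin, hnorm]
  congr 2
  rw [← Finset.sum_div, Finset.sum_neg_distrib, neg_div]

lemma aux_map_withDensity {α β : Type*} [MeasurableSpace α] [MeasurableSpace β]
    (e : α ≃ᵐ β) (μ : Measure α) (g : β → ℝ≥0∞) (hg : Measurable g) :
    Measure.map e (μ.withDensity (g ∘ e)) = (Measure.map e μ).withDensity g := by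
  ext s hs
  rw [Measure.map_apply e.measurable hs, withDensity_apply _ hs,
    withDensity_apply _ (e.measurable hs), setLIntegral_map hs hg e.measurable]
  rfl

lemma aux_stdGaussian_eq (d : ℕ) :
    stdGaussian d = (volume : Measure (EuclideanSpace ℝ (Fin d))).withDensity
      (fun x => ENNReal.ofReal
        ((Real.sqrt (2 * Real.pi))⁻¹ ^ d * Real.exp (-‖x‖ ^ 2 / 2))) := by
  set ρ : EuclideanSpace ℝ (Fin d) → ℝ≥0∞ := fun x => ENNReal.ofReal
    ((Real.sqrt (2 * Real.pi))⁻¹ ^ d * Real.exp (-‖x‖ ^ 2 / 2)) with hρ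
  have hρm : Measurable ρ := by
    apply Measurable.ennreal_ofReal
    exact (measurable_const.mul ((measurable_norm.pow_const 2).neg.div_const 2).exp)
  have h0 : stdGaussian d
      = Measure.map (⇑(MeasurableEquiv.toLp 2 (Fin d → ℝ)))
          (Measure.pi fun _ : Fin d => gaussianReal 0 1) := by
    rfl
  rw [h0, aux_pi_gaussian d]
  have hG : (fun x : Fin d → ℝ => ∏ i, gaussianPDF 0 1 (x i))
      = ρ ∘ ⇑(MeasurableEquiv.toLp 2 (Fin d → ℝ)) := by
    funext x
    exact aux_prod_pdf_eq d ((MeasurableEquiv.toLp 2 (Fin d → ℝ)) x)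
  rw [hG, aux_map_withDensity _ _ _ hρm]
  congr 1
  exact (MeasurePreserving.symm _
    (EuclideanSpace.volume_preserving_symm_measurableEquiv_toLp (Fin d))).map_eq

lemma aux_iso_mp {d : ℕ} (e : EuclideanSpace ℝ (Fin d) ≃ₗᵢ[ℝ] EuclideanSpace ℝ (Fin d)) :
    MeasurePreserving e volume volume := by
  set b : OrthonormalBasis (Fin d) ℝ (EuclideanSpace ℝ (Fin d)) :=
    EuclideanSpace.basisFun (Fin d) ℝ
  have h := ((b.map e).measurePreserving_repr_symm).comp b.measurePreserving_repr
  have he : ⇑e = ⇑(b.map e).repr.symm ∘ ⇑b.repr := by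
    funext z
    simp [OrthonormalBasis.map, LinearIsometryEquiv.symm_trans]
  rw [he]
  exact h

lemma aux_mp_withDensity {α : Type*} [MeasurableSpace α] {μ : Measure α} {e : α ≃ᵐ α}
    (h : MeasurePreserving e μ μ) {g : α → ℝ≥0∞} (hg : Measurable g)
    (hge : ∀ x, g (e x) = g x) :
    MeasurePreserving e (μ.withDensity g) (μ.withDensity g) := by
  refine ⟨e.measurable, ?_⟩
  have hgeq : g ∘ ⇑e = g := funext hge
  calc Measure.map e (μ.withDensity g)
      = Measure.map e (μ.withDensity (g ∘ ⇑e)) := by rw [hgeq]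
    _ = (Measure.map e μ).withDensity g := aux_map_withDensity e μ g hg
    _ = μ.withDensity g := by rw [h.map_eq]

/-- Even-symmetric directions are hard: if `f (R_v z) = f z` for all `z`, then no analytic
transformation of the output of `f` correlates linearly with `v` under the standard Gaussian. -/
theorem even_symmetric_direction_is_hard
    (d : ℕ) (hd : 1 ≤ d)
    (v : EuclideanSpace ℝ (Fin d)) (hv : v ≠ 0)
    (f : EuclideanSpace ℝ (Fin d) → ℝ) (hf : Measurable f)
    (hsym : ∀ z, f (reflAlong v z) = f z) :
    ∀ F : ℝ → ℝ, (∀ x, AnalyticAt ℝ F x) →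
      Integrable (fun z => F (f z) * (inner ℝ v z : ℝ)) (stdGaussian d) →
      ∫ z, F (f z) * (inner ℝ v z : ℝ) ∂(stdGaussian d) = 0 := by
  intro F _hFan _hInt
  set e : EuclideanSpace ℝ (Fin d) ≃ₗᵢ[ℝ] EuclideanSpace ℝ (Fin d) :=
    Submodule.reflection (ℝ ∙ v)ᗮ with hedef
  have he : ∀ z, e z = reflAlong v z := by
    intro z
    rw [hedef]
    rw [Submodule.reflection_orthogonal_apply, Submodule.reflection_singleton_apply]
    unfold reflAlong
    rw [neg_sub]
    show z - (2 : ℕ) • ((inner ℝ v z : ℝ) / ‖v‖ ^ 2) • v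
      = z - (2 * (inner ℝ v z : ℝ) / ‖v‖ ^ 2) • v
    congr 1
    rw [two_smul, ← add_smul]
    congr 1
    ring
  have hinner : ∀ z : EuclideanSpace ℝ (Fin d),
      (inner ℝ v (e z) : ℝ) = - (inner ℝ v z : ℝ) := by
    intro z
    rw [he]
    unfold reflAlong
    rw [inner_sub_right, real_inner_smul_right, real_inner_self_eq_norm_sq]
    have hv2 : (‖v‖ : ℝ) ^ 2 ≠ 0 := pow_ne_zero 2 (norm_ne_zero_iff.mpr hv)
    field_simp
    ring
  have hmp : MeasurePreserving (⇑e.toHomeomorph.toMeasurableEquiv) (stdGaussian d) (stdGaussian d) := by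
    rw [aux_stdGaussian_eq d]
    refine aux_mp_withDensity ?_ ?_ ?_
    · exact aux_iso_mp e
    · exact Measurable.ennreal_ofReal
        (measurable_const.mul ((measurable_norm.pow_const 2).neg.div_const 2).exp)
    · intro x
      simp only [Homeomorph.toMeasurableEquiv_coe, LinearIsometryEquiv.coe_toHomeomorph]
      rw [e.norm_map]
  have key := hmp.integral_comp e.toHomeomorph.toMeasurableEquiv.measurableEmbedding
    (fun z => F (f z) * (inner ℝ v z : ℝ))
  simp only [Homeomorph.toMeasurableEquiv_coe, LinearIsometryEquiv.coe_toHomeomorph] at key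
  have hleft : ∀ z : EuclideanSpace ℝ (Fin d), F (f (e z)) * (inner ℝ v (e z) : ℝ)
      = - (F (f z) * (inner ℝ v z : ℝ)) := by
    intro z
    rw [hinner, he, hsym]
    ring
  simp_rw [hleft] at key
  rw [integral_neg] at key
  linarith
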